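/- arXiv:1012.1793 — 4 statements merged into one kernel-verified Lean document; each statement's English description precedes it below -/
import Mathlib

section
/- Under the Setup, fix 0 ≤ t < T. If φ is strictly decreasing on [0,∞), then the function ξ ↦ P(t,T,ξ) is strictly decreasing on ℝ; if φ is strictly increasing on [0,∞), then ξ ↦ P(t,T,ξ) is strictly increasing on ℝ. -/
open MeasureTheory Real

/-- `D(t,T,ξ) = ∫_T^∞ ρ s * exp (φ s * ξ - ψ (φ s) * t) ds`. -/
noncomputable def Dfun (ρ φ ψ : ℝ → ℝ) (t T ξ : ℝ) : ℝ :=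
  ∫ s in Set.Ioi T, ρ s * Real.exp (φ s * ξ - ψ (φ s) * t)

/-- The bond price function `P(t,T,ξ) = D(t,T,ξ) / D(t,t,ξ)`. -/
noncomputable def Pfun (ρ φ ψ : ℝ → ℝ) (t T ξ : ℝ) : ℝ :=
  Dfun ρ φ ψ t T ξ / Dfun ρ φ ψ t t ξ

/-- `Φ(t,T,ξ)`, the weighted average of `φ s` for `s ≥ T`. -/
noncomputable def PhiFun (ρ φ ψ : ℝ → ℝ) (t T ξ : ℝ) : ℝ :=
  (∫ s in Set.Ioi T, φ s * ρ s * Real.exp (φ s * ξ - ψ (φ s) * t)) / Dfun ρ φ ψ t T ξ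

/-- The instantaneous forward rate `f(t,T,ξ)`. -/
noncomputable def fwdFun (ρ φ ψ : ℝ → ℝ) (t T ξ : ℝ) : ℝ :=
  ρ T * Real.exp (φ T * ξ - ψ (φ T) * t) / Dfun ρ φ ψ t T ξ

lemma g_contOn (ρ φ ψ : ℝ → ℝ)
    (hρc : ContinuousOn ρ (Set.Ioi 0)) (hφc : ContinuousOn φ (Set.Ici 0))
    (hψc : Continuous ψ) (t ξ : ℝ) :
    ContinuousOn (fun s => ρ s * Real.exp (φ s * ξ - ψ (φ s) * t)) (Set.Ioi 0) := by
  have hφ' : ContinuousOn φ (Set.Ioi 0) := hφc.mono Set.Ioi_subset_Ici_self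
  exact hρc.mul (Real.continuous_exp.comp_continuousOn
    ((hφ'.mul continuousOn_const).sub ((hψc.comp_continuousOn hφ').mul continuousOn_const)))

lemma g_integrable (ρ φ ψ : ℝ → ℝ)
    (hρc : ContinuousOn ρ (Set.Ioi 0)) (hρpos : ∀ s : ℝ, 0 < s → 0 < ρ s)
    (hρint : ∫ s in Set.Ioi (0 : ℝ), ρ s = 1)
    (hφc : ContinuousOn φ (Set.Ici 0)) (hφb : ∃ C : ℝ, ∀ s : ℝ, 0 ≤ s → |φ s| ≤ C)
    (hψc : Continuous ψ) (t ξ : ℝ) :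
    IntegrableOn (fun s => ρ s * Real.exp (φ s * ξ - ψ (φ s) * t)) (Set.Ioi 0) := by
  have hρI : IntegrableOn ρ (Set.Ioi 0) := by
    by_contra h
    rw [integral_undef h] at hρint; norm_num at hρint
  obtain ⟨C, hC⟩ := hφb
  obtain ⟨M, hM⟩ := (isCompact_Icc (a := -C) (b := C)).exists_bound_of_continuousOn
    hψc.continuousOn
  set K : ℝ := C * |ξ| + M * |t| with hK
  refine Integrable.mono' ((hρI.const_mul (Real.exp K)))
    ((g_contOn ρ φ ψ hρc hφc hψc t ξ).aestronglyMeasurable measurableSet_Ioi) ?_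
  filter_upwards [ae_restrict_mem measurableSet_Ioi] with s hs
  have hs0 : (0:ℝ) < s := hs
  have hρs := (hρpos s hs0).le
  have hb : |φ s| ≤ C := hC s hs0.le
  have hψb : |ψ (φ s)| ≤ M := hM (φ s) (abs_le.mp hb)
  have hexp : φ s * ξ - ψ (φ s) * t ≤ K := by
    have h1 : φ s * ξ ≤ C * |ξ| := by
      calc φ s * ξ ≤ |φ s * ξ| := le_abs_self _
        _ = |φ s| * |ξ| := abs_mul _ _
        _ ≤ C * |ξ| := by gcongr
    have h2 : -(ψ (φ s) * t) ≤ M * |t| := by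
      calc -(ψ (φ s) * t) ≤ |ψ (φ s) * t| := neg_le_abs _
        _ = |ψ (φ s)| * |t| := abs_mul _ _
        _ ≤ M * |t| := by gcongr
    linarith
  have : ‖ρ s * Real.exp (φ s * ξ - ψ (φ s) * t)‖
      = ρ s * Real.exp (φ s * ξ - ψ (φ s) * t) := by
    rw [Real.norm_eq_abs, abs_of_nonneg (mul_nonneg hρs (Real.exp_pos _).le)]
  rw [this]
  calc ρ s * Real.exp (φ s * ξ - ψ (φ s) * t) ≤ ρ s * Real.exp K := by
        gcongr
    _ = Real.exp K * ρ s := mul_comm _ _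

/-- The key monotonicity lemma: decreasing case. -/
lemma Pfun_strictAnti (ρ φ ψ : ℝ → ℝ)
    (hρc : ContinuousOn ρ (Set.Ioi 0)) (hρpos : ∀ s : ℝ, 0 < s → 0 < ρ s)
    (hρint : ∫ s in Set.Ioi (0 : ℝ), ρ s = 1)
    (hφc : ContinuousOn φ (Set.Ici 0)) (hφb : ∃ C : ℝ, ∀ s : ℝ, 0 ≤ s → |φ s| ≤ C)
    (hψc : Continuous ψ)
    (t T : ℝ) (ht : 0 ≤ t) (htT : t < T)
    (hφ : StrictAntiOn φ (Set.Ici 0)) :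
    StrictAnti fun ξ => Pfun ρ φ ψ t T ξ := by
  intro ξ₁ ξ₂ hξ
  set g : ℝ → ℝ → ℝ := fun ξ s => ρ s * Real.exp (φ s * ξ - ψ (φ s) * t) with hg
  have hT0 : (0:ℝ) < T := ht.trans_lt htT
  have hTmem : T ∈ Set.Ici (0:ℝ) := hT0.le
  have hIoiT : Set.Ioi T ⊆ Set.Ioi (0:ℝ) := fun s hs => lt_trans hT0 hs
  have hIoc : Set.Ioc t T ⊆ Set.Ioi (0:ℝ) := fun s hs => by
    rcases lt_or_ge 0 t with h | h
    · exact lt_trans h hs.1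
    · exact lt_of_le_of_lt ht hs.1
  have hgint : ∀ ξ, IntegrableOn (g ξ) (Set.Ioi 0) := fun ξ =>
    g_integrable ρ φ ψ hρc hρpos hρint hφc hφb hψc t ξ
  have hgpos : ∀ ξ s, 0 < s → 0 < g ξ s := fun ξ s hs =>
    mul_pos (hρpos s hs) (Real.exp_pos _)
  set Δ : ℝ := ξ₂ - ξ₁ with hΔ
  have hΔpos : 0 < Δ := sub_pos.mpr hξ
  have hgmul : ∀ s, g ξ₂ s = g ξ₁ s * Real.exp (φ s * Δ) := by
    intro s
    simp only [hg]
    rw [mul_assoc, ← Real.exp_add]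
    ring_nf
    rw [hΔ]; ring_nf
  set e : ℝ := Real.exp (φ T * Δ) with he
  have hepos : 0 < e := Real.exp_pos _
  -- A ξ = Dfun at T, B ξ = integral over Ioc t T
  set A : ℝ → ℝ := fun ξ => ∫ s in Set.Ioi T, g ξ s with hA
  set B : ℝ → ℝ := fun ξ => ∫ s in Set.Ioc t T, g ξ s with hB
  have hDT : ∀ ξ, Dfun ρ φ ψ t T ξ = A ξ := fun ξ => rfl
  have hAint : ∀ ξ, IntegrableOn (g ξ) (Set.Ioi T) := fun ξ =>
    (hgint ξ).mono_set hIoiT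
  have hBint : ∀ ξ, IntegrableOn (g ξ) (Set.Ioc t T) := fun ξ =>
    (hgint ξ).mono_set hIoc
  have hDt : ∀ ξ, Dfun ρ φ ψ t t ξ = B ξ + A ξ := by
    intro ξ
    have := setIntegral_union (f := g ξ) (μ := volume)
      (Set.Ioc_disjoint_Ioi le_rfl) measurableSet_Ioi (hBint ξ) (hAint ξ)
    rw [Set.Ioc_union_Ioi_eq_Ioi htT.le] at this
    exact this
  have hApos : ∀ ξ, 0 < A ξ := by
    intro ξ
    rw [hA]
    rw [setIntegral_pos_iff_support_of_nonneg_ae ?_ (hAint ξ)]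
    · refine lt_of_lt_of_le ?_ (measure_mono (s := Set.Ioi T)
        (fun s hs => ⟨(hgpos ξ s (hIoiT hs)).ne', hs⟩))
      simp [Real.volume_Ioi]
    · filter_upwards [ae_restrict_mem measurableSet_Ioi] with s hs
      exact (hgpos ξ s (hIoiT hs)).le
  have hBpos : ∀ ξ, 0 < B ξ := by
    intro ξ
    rw [hB]
    rw [setIntegral_pos_iff_support_of_nonneg_ae ?_ (hBint ξ)]
    · refine lt_of_lt_of_le ?_ (measure_mono (s := Set.Ioo t T)
        (fun s hs => ⟨(hgpos ξ s (hIoc ⟨hs.1, hs.2.le⟩)).ne', hs.1, hs.2.le⟩))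
      rw [Real.volume_Ioo]
      simp [htT]
    · filter_upwards [ae_restrict_mem measurableSet_Ioc] with s hs
      exact (hgpos ξ s (hIoc hs)).le
  -- A ξ₂ ≤ e * A ξ₁
  have hAle : A ξ₂ ≤ e * A ξ₁ := by
    have : A ξ₂ ≤ ∫ s in Set.Ioi T, e * g ξ₁ s := by
      refine setIntegral_mono_on (hAint ξ₂) ((hAint ξ₁).const_mul e)
        measurableSet_Ioi ?_
      intro s hs
      rw [hgmul s, mul_comm (e) (g ξ₁ s)]
      have hsmem : s ∈ Set.Ici (0:ℝ) := Set.mem_Ici.mpr (hIoiT hs).le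
      have : φ s ≤ φ T := (hφ hTmem hsmem hs).le
      gcongr
      · exact (hgpos ξ₁ s (hIoiT hs)).le
      · exact Real.exp_le_exp.mpr (by nlinarith)
    rwa [integral_const_mul] at this
  -- e * B ξ₁ < B ξ₂
  have hBlt : e * B ξ₁ < B ξ₂ := by
    have key : 0 < ∫ s in Set.Ioc t T, (g ξ₁ s * Real.exp (φ s * Δ) - e * g ξ₁ s) := by
      have hint2 : IntegrableOn (fun s => g ξ₁ s * Real.exp (φ s * Δ)) (Set.Ioc t T) := by
        refine (hBint ξ₂).congr_fun (fun s _ => hgmul s) measurableSet_Ioc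
      have hint3 : IntegrableOn (fun s => g ξ₁ s * Real.exp (φ s * Δ) - e * g ξ₁ s) (Set.Ioc t T) :=
        hint2.sub ((hBint ξ₁).const_mul e)
      rw [setIntegral_pos_iff_support_of_nonneg_ae ?_ hint3]
      · refine lt_of_lt_of_le ?_ (measure_mono (s := Set.Ioo t T) ?_)
        · rw [Real.volume_Ioo]; simp [htT]
        · intro s hs
          have hs0 : 0 < s := hIoc ⟨hs.1, hs.2.le⟩
          have hφs : φ T < φ s := hφ hs0.le hTmem hs.2
          have : e < Real.exp (φ s * Δ) := by
            rw [he]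
            exact Real.exp_lt_exp.mpr (by nlinarith)
          refine ⟨?_, hs.1, hs.2.le⟩
          have hgp := hgpos ξ₁ s hs0
          simp only [Function.mem_support]
          intro hcontra
          nlinarith
      · filter_upwards [ae_restrict_mem measurableSet_Ioc] with s hs
        have hs0 : 0 < s := hIoc hs
        have hφs : φ T ≤ φ s := (hφ.antitoneOn hs0.le hTmem hs.2)
        have : e ≤ Real.exp (φ s * Δ) := by
          rw [he]; exact Real.exp_le_exp.mpr (by nlinarith)
        have hgp := (hgpos ξ₁ s hs0).le
        simp only [Pi.zero_apply]
        nlinarith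
    have hint2 : IntegrableOn (fun s => g ξ₁ s * Real.exp (φ s * Δ)) (Set.Ioc t T) :=
      (hBint ξ₂).congr_fun (fun s _ => hgmul s) measurableSet_Ioc
    rw [integral_sub hint2 ((hBint ξ₁).const_mul e), integral_const_mul] at key
    have : ∫ s in Set.Ioc t T, g ξ₁ s * Real.exp (φ s * Δ) = B ξ₂ := by
      refine setIntegral_congr_fun measurableSet_Ioc (fun s _ => (hgmul s).symm)
    linarith [key, this ▸ key]
  -- conclude
  show Pfun ρ φ ψ t T ξ₂ < Pfun ρ φ ψ t T ξ₁
  rw [Pfun, Pfun, hDT, hDT, hDt, hDt]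
  rw [div_lt_div_iff₀ (by linarith [hBpos ξ₂, hApos ξ₂]) (by linarith [hBpos ξ₁, hApos ξ₁])]
  nlinarith [hApos ξ₁, hApos ξ₂, hBpos ξ₁, hBpos ξ₂, hAle, hBlt,
    mul_pos (hApos ξ₁) (hBpos ξ₁)]

lemma Dfun_neg (ρ φ ψ : ℝ → ℝ) (t T ξ : ℝ) :
    Dfun ρ (fun s => -φ s) (fun x => ψ (-x)) t T ξ = Dfun ρ φ ψ t T (-ξ) := by
  unfold Dfun
  congr 1
  ext s
  ring_nf

/-- If `φ` is strictly decreasing on `[0,∞)` then `ξ ↦ P(t,T,ξ)` is strictly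
decreasing; if `φ` is strictly increasing on `[0,∞)` then `ξ ↦ P(t,T,ξ)` is
strictly increasing. -/
theorem bond_price_monotone_in_xi
    (ρ φ ψ : ℝ → ℝ)
    (hρc : ContinuousOn ρ (Set.Ioi 0)) (hρpos : ∀ s : ℝ, 0 < s → 0 < ρ s)
    (hρint : ∫ s in Set.Ioi (0 : ℝ), ρ s = 1)
    (hφc : ContinuousOn φ (Set.Ici 0)) (hφb : ∃ C : ℝ, ∀ s : ℝ, 0 ≤ s → |φ s| ≤ C)
    (hψc : Continuous ψ)
    (t T : ℝ) (ht : 0 ≤ t) (htT : t < T) :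
    (StrictAntiOn φ (Set.Ici 0) → StrictAnti fun ξ => Pfun ρ φ ψ t T ξ) ∧
    (StrictMonoOn φ (Set.Ici 0) → StrictMono fun ξ => Pfun ρ φ ψ t T ξ) := by
  constructor
  · intro hφanti
    exact Pfun_strictAnti ρ φ ψ hρc hρpos hρint hφc hφb hψc t T ht htT hφanti
  · intro hφmono
    have key : StrictAnti fun ξ => Pfun ρ (fun s => -φ s) (fun x => ψ (-x)) t T ξ := by
      refine Pfun_strictAnti ρ _ _ hρc hρpos hρint (hφc.neg) ?_
        (hψc.comp continuous_neg) t T ht htT ?_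
      · obtain ⟨C, hC⟩ := hφb
        exact ⟨C, fun s hs => by rw [Pi.neg_apply, abs_neg]; exact hC s hs⟩
      · intro a ha b hb hab
        simpa using hφmono ha hb hab
    intro ξ₁ ξ₂ hξ
    have h1 : ∀ ξ, Pfun ρ (fun s => -φ s) (fun x => ψ (-x)) t T (-ξ) = Pfun ρ φ ψ t T ξ := by
      intro ξ
      unfold Pfun
      rw [Dfun_neg, Dfun_neg, neg_neg]
    have := key (neg_lt_neg hξ)
    simpa [h1] using this
end

section
/- Under the Setup with ψ(α) = α²/2 (the geometric Brownian motion family), suppose that either φ_s > 0 for all s ≥ 0 and φ is strictly decreasing, or φ_s < 0 for all s ≥ 0 and φ is strictly increasing. Then for all 0 ≤ t < T and all ξ ∈ ℝ, the risk premium Φ(t,t,ξ) · (Φ(t,t,ξ) − Φ(t,T,ξ)) is strictly positive. -/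
open MeasureTheory Real

/-- Main analytic lemma: for positive, strictly decreasing `φ`, the weighted
average `Φ(t,T,ξ)` is positive at `T = t` and strictly smaller at `T > t`. -/
lemma phi_pos_and_lt
    (ρ φ : ℝ → ℝ)
    (hρc : ContinuousOn ρ (Set.Ioi 0)) (hρpos : ∀ s : ℝ, 0 < s → 0 < ρ s)
    (hρInt : IntegrableOn ρ (Set.Ioi 0))
    (hφc : ContinuousOn φ (Set.Ici 0)) (C : ℝ) (hC : ∀ s : ℝ, 0 ≤ s → |φ s| ≤ C)
    (hpos : ∀ s : ℝ, 0 ≤ s → 0 < φ s) (hanti : StrictAntiOn φ (Set.Ici 0))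
    (t T ξ : ℝ) (ht : 0 ≤ t) (htT : t < T) :
    0 < PhiFun ρ φ (fun α => α ^ 2 / 2) t t ξ ∧
      PhiFun ρ φ (fun α => α ^ 2 / 2) t T ξ < PhiFun ρ φ (fun α => α ^ 2 / 2) t t ξ := by
  set w : ℝ → ℝ := fun s => ρ s * Real.exp (φ s * ξ - (φ s) ^ 2 / 2 * t) with hw
  have hT0 : (0:ℝ) < T := lt_of_le_of_lt ht htT
  have hC0 : 0 ≤ C := le_trans (abs_nonneg _) (hC 0 le_rfl)
  -- positivity of w on Ioi 0
  have hwpos : ∀ s : ℝ, 0 < s → 0 < w s := fun s hs =>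
    mul_pos (hρpos s hs) (Real.exp_pos _)
  -- continuity of w on Ioi 0
  have hφc' : ContinuousOn φ (Set.Ioi 0) := hφc.mono (Set.Ioi_subset_Ici le_rfl)
  have hwc : ContinuousOn w (Set.Ioi 0) := by
    apply hρc.mul
    exact (((hφc'.mul continuousOn_const).sub
      (((hφc'.pow 2).div_const 2).mul continuousOn_const)).rexp)
  -- integrability of w on Ioi 0
  have hwInt : IntegrableOn w (Set.Ioi 0) := by
    apply Integrable.mono (hρInt.const_mul (Real.exp (C * |ξ|)))
      (hwc.aestronglyMeasurable measurableSet_Ioi)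
    filter_upwards [ae_restrict_mem measurableSet_Ioi] with s hs
    have h1 : φ s * ξ - (φ s) ^ 2 / 2 * t ≤ C * |ξ| := by
      have h2 : φ s * ξ ≤ |φ s| * |ξ| := le_trans (le_abs_self _) (le_of_eq (abs_mul _ _))
      have h3 : |φ s| * |ξ| ≤ C * |ξ| :=
        mul_le_mul_of_nonneg_right (hC s (le_of_lt hs)) (abs_nonneg _)
      nlinarith [sq_nonneg (φ s), mul_nonneg (sq_nonneg (φ s)) ht]
    have hwnn : 0 ≤ w s := (hwpos s hs).le
    rw [Real.norm_eq_abs, Real.norm_eq_abs, abs_of_nonneg hwnn, abs_of_nonneg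
      (mul_nonneg (Real.exp_pos _).le (hρpos s hs).le)]
    calc w s = ρ s * Real.exp (φ s * ξ - (φ s) ^ 2 / 2 * t) := rfl
      _ ≤ ρ s * Real.exp (C * |ξ|) :=
          mul_le_mul_of_nonneg_left (Real.exp_le_exp.2 h1) (hρpos s hs).le
      _ = Real.exp (C * |ξ|) * ρ s := mul_comm _ _
  -- integrability of φ * w on Ioi 0
  have hφwc : ContinuousOn (fun s => φ s * w s) (Set.Ioi 0) := hφc'.mul hwc
  have hφwInt : IntegrableOn (fun s => φ s * w s) (Set.Ioi 0) := by
    apply Integrable.mono (hwInt.const_mul C)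
      (hφwc.aestronglyMeasurable measurableSet_Ioi)
    filter_upwards [ae_restrict_mem measurableSet_Ioi] with s hs
    have hwnn : 0 ≤ w s := (hwpos s hs).le
    rw [Real.norm_eq_abs, Real.norm_eq_abs, abs_mul, abs_of_nonneg hwnn,
      abs_of_nonneg (mul_nonneg hC0 hwnn)]
    exact mul_le_mul_of_nonneg_right (hC s (le_of_lt hs)) hwnn
  -- subsets
  have hIt : Set.Ioi t ⊆ Set.Ioi (0:ℝ) := Set.Ioi_subset_Ioi ht
  have hIT : Set.Ioi T ⊆ Set.Ioi (0:ℝ) := Set.Ioi_subset_Ioi hT0.le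
  have hIoc : Set.Ioc t T ⊆ Set.Ioi (0:ℝ) := fun s hs => lt_of_le_of_lt ht hs.1
  -- the six quantities
  set Dt := ∫ s in Set.Ioi t, w s with hDt
  set DT := ∫ s in Set.Ioi T, w s with hDT
  set A := ∫ s in Set.Ioc t T, w s with hA
  set Nt := ∫ s in Set.Ioi t, φ s * w s with hNt
  set NT := ∫ s in Set.Ioi T, φ s * w s with hNT
  set M := ∫ s in Set.Ioc t T, φ s * w s with hM
  -- positivity of denominators
  have hkey : ∀ a : ℝ, 0 ≤ a → 0 < ∫ s in Set.Ioi a, w s := by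
    intro a ha
    rw [setIntegral_pos_iff_support_of_nonneg_ae]
    · refine lt_of_lt_of_le ?_ (measure_mono (s := Set.Ioi (max a 1)) ?_)
      · simp [Real.volume_Ioi]
      · intro s hs
        have hs1 : a < s := lt_of_le_of_lt (le_max_left a 1) hs
        have hs0 : 0 < s := lt_of_lt_of_le (lt_of_lt_of_le zero_lt_one (le_max_right a 1)) hs.le
        exact ⟨(hwpos s hs0).ne', hs1⟩
    · filter_upwards [ae_restrict_mem measurableSet_Ioi] with s hs
      exact (hwpos s (lt_of_le_of_lt ha hs)).le
    · exact hwInt.mono_set (Set.Ioi_subset_Ioi ha)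
  have hDtpos : 0 < Dt := hkey t ht
  have hDTpos : 0 < DT := hkey T hT0.le
  -- positivity of A
  have hIooA : Set.Ioo t T ⊆ Function.support w ∩ Set.Ioc t T := by
    intro s hs
    exact ⟨(hwpos s (lt_of_le_of_lt ht hs.1)).ne', hs.1, hs.2.le⟩
  have hApos : 0 < A := by
    rw [hA, setIntegral_pos_iff_support_of_nonneg_ae]
    · refine lt_of_lt_of_le ?_ (measure_mono hIooA)
      rw [Real.volume_Ioo]
      exact ENNReal.ofReal_pos.2 (sub_pos.2 htT)
    · filter_upwards [ae_restrict_mem measurableSet_Ioc] with s hs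
      exact (hwpos s (hIoc hs)).le
    · exact hwInt.mono_set hIoc
  -- positivity of Nt
  have hNtpos : 0 < Nt := by
    rw [hNt, setIntegral_pos_iff_support_of_nonneg_ae]
    · refine lt_of_lt_of_le ?_ (measure_mono (s := Set.Ioi T) ?_)
      · simp [Real.volume_Ioi]
      · intro s hs
        have hs0 : 0 < s := lt_trans hT0 hs
        exact ⟨(mul_pos (hpos s hs0.le) (hwpos s hs0)).ne', lt_trans htT hs⟩
    · filter_upwards [ae_restrict_mem measurableSet_Ioi] with s hs
      have hs0 : 0 < s := hIt hs
      exact (mul_pos (hpos s hs0.le) (hwpos s hs0)).le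
    · exact hφwInt.mono_set hIt
  -- splitting
  have hsplitD : Dt = A + DT := by
    rw [hDt, hA, hDT, ← setIntegral_union (Set.Ioc_disjoint_Ioi le_rfl)
      measurableSet_Ioi (hwInt.mono_set hIoc) (hwInt.mono_set hIT),
      Set.Ioc_union_Ioi_eq_Ioi htT.le]
  have hsplitN : Nt = M + NT := by
    rw [hNt, hM, hNT, ← setIntegral_union (Set.Ioc_disjoint_Ioi le_rfl)
      measurableSet_Ioi (hφwInt.mono_set hIoc) (hφwInt.mono_set hIT),
      Set.Ioc_union_Ioi_eq_Ioi htT.le]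
  -- M > φ T * A
  have hφTA : φ T * A < M := by
    have hgInt : IntegrableOn (fun s => (φ s - φ T) * w s) (Set.Ioc t T) := by
      have := (hφwInt.mono_set hIoc).sub ((hwInt.mono_set hIoc).const_mul (φ T))
      simpa [sub_mul, Pi.sub_def] using this
    have hgpos : 0 < ∫ s in Set.Ioc t T, (φ s - φ T) * w s := by
      rw [setIntegral_pos_iff_support_of_nonneg_ae]
      · refine lt_of_lt_of_le ?_ (measure_mono (s := Set.Ioo t T) ?_)
        · rw [Real.volume_Ioo]
          exact ENNReal.ofReal_pos.2 (sub_pos.2 htT)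
        · intro s hs
          have hs0 : 0 ≤ s := le_of_lt (lt_of_le_of_lt ht hs.1)
          have : φ T < φ s := hanti hs0 hT0.le hs.2
          exact ⟨(mul_pos (sub_pos.2 this) (hwpos s (lt_of_le_of_lt ht hs.1))).ne',
            hs.1, hs.2.le⟩
      · filter_upwards [ae_restrict_mem measurableSet_Ioc] with s hs
        have hs0 : 0 ≤ s := le_of_lt (hIoc hs)
        have hφs : φ T ≤ φ s := by
          rcases eq_or_lt_of_le hs.2 with h | h
          · rw [h]
          · exact (hanti hs0 hT0.le h).le
        exact mul_nonneg (sub_nonneg.2 hφs) (hwpos s (hIoc hs)).le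
      · exact hgInt
    have heq : ∫ s in Set.Ioc t T, (φ s - φ T) * w s = M - φ T * A := by
      rw [hM, hA]
      rw [show (fun s => (φ s - φ T) * w s) = fun s => φ s * w s - φ T * w s by
        funext s; ring]
      rw [integral_sub (hφwInt.mono_set hIoc) ((hwInt.mono_set hIoc).const_mul (φ T)),
        integral_const_mul]
    linarith [heq ▸ hgpos]
  -- NT ≤ φ T * DT
  have hNTle : NT ≤ φ T * DT := by
    have : NT ≤ ∫ s in Set.Ioi T, φ T * w s := by
      apply setIntegral_mono_on (hφwInt.mono_set hIT)
        ((hwInt.mono_set hIT).const_mul (φ T)) measurableSet_Ioi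
      intro s hs
      have hs0 : 0 < s := lt_trans hT0 hs
      exact mul_le_mul_of_nonneg_right (hanti hT0.le hs0.le hs).le (hwpos s hs0).le
    rwa [integral_const_mul] at this
  -- identify PhiFun values
  have hPhit : PhiFun ρ φ (fun α => α ^ 2 / 2) t t ξ = Nt / Dt := by
    simp only [PhiFun, Dfun, hNt, hDt, hw, mul_assoc]
  have hPhiT : PhiFun ρ φ (fun α => α ^ 2 / 2) t T ξ = NT / DT := by
    simp only [PhiFun, Dfun, hNT, hDT, hw, mul_assoc]
  constructor
  · rw [hPhit]; exact div_pos hNtpos hDtpos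
  · rw [hPhit, hPhiT, div_lt_div_iff₀ hDTpos hDtpos]
    rw [hsplitD, hsplitN]
    nlinarith [mul_le_mul_of_nonneg_right hNTle hApos.le,
      mul_lt_mul_of_pos_right hφTA hDTpos]

/-- Positivity of the risk premium in the geometric Brownian motion family
(`ψ α = α² / 2`): if `φ` is positive and strictly decreasing, or negative and
strictly increasing, then `Φ(t,t,ξ) * (Φ(t,t,ξ) - Φ(t,T,ξ)) > 0`. -/
theorem risk_premium_positive_GBM
    (ρ φ : ℝ → ℝ)
    (hρc : ContinuousOn ρ (Set.Ioi 0)) (hρpos : ∀ s : ℝ, 0 < s → 0 < ρ s)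
    (hρint : ∫ s in Set.Ioi (0 : ℝ), ρ s = 1)
    (hφc : ContinuousOn φ (Set.Ici 0)) (hφb : ∃ C : ℝ, ∀ s : ℝ, 0 ≤ s → |φ s| ≤ C)
    (hφ : ((∀ s : ℝ, 0 ≤ s → 0 < φ s) ∧ StrictAntiOn φ (Set.Ici 0)) ∨
          ((∀ s : ℝ, 0 ≤ s → φ s < 0) ∧ StrictMonoOn φ (Set.Ici 0))) :
    ∀ t T ξ : ℝ, 0 ≤ t → t < T →
      0 < PhiFun ρ φ (fun α => α ^ 2 / 2) t t ξ *
        (PhiFun ρ φ (fun α => α ^ 2 / 2) t t ξ -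
          PhiFun ρ φ (fun α => α ^ 2 / 2) t T ξ) := by
  obtain ⟨C, hC⟩ := hφb
  have hρInt : IntegrableOn ρ (Set.Ioi 0) := by
    by_contra h
    rw [integral_undef h] at hρint
    exact one_ne_zero hρint.symm
  intro t T ξ ht htT
  rcases hφ with ⟨hpos, hanti⟩ | ⟨hneg, hmono⟩
  · obtain ⟨h1, h2⟩ := phi_pos_and_lt ρ φ hρc hρpos hρInt hφc C hC hpos hanti t T ξ ht htT
    nlinarith
  · -- apply the lemma to -φ with -ξ
    have hkey : ∀ S : ℝ, 0 ≤ S →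
        PhiFun ρ (fun s => -φ s) (fun α => α ^ 2 / 2) t S (-ξ) =
          - PhiFun ρ φ (fun α => α ^ 2 / 2) t S ξ := by
      intro S hS
      simp only [PhiFun, Dfun]
      have h1 : ∀ s : ℝ, -φ s * -ξ - (-φ s) ^ 2 / 2 * t = φ s * ξ - (φ s) ^ 2 / 2 * t := by
        intro s; ring
      rw [show (fun s => -φ s * ρ s * Real.exp (-φ s * -ξ - (-φ s) ^ 2 / 2 * t)) =
          fun s => -(φ s * ρ s * Real.exp (φ s * ξ - (φ s) ^ 2 / 2 * t)) by
        funext s; rw [h1]; ring]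
      rw [show (fun s => ρ s * Real.exp (-φ s * -ξ - (-φ s) ^ 2 / 2 * t)) =
          fun s => ρ s * Real.exp (φ s * ξ - (φ s) ^ 2 / 2 * t) by
        funext s; rw [h1]]
      rw [integral_neg, neg_div]
    obtain ⟨h1, h2⟩ := phi_pos_and_lt ρ (fun s => -φ s) hρc hρpos hρInt hφc.neg C
      (fun s hs => by simpa using hC s hs)
      (fun s hs => by simpa using hneg s hs) hmono.neg t T (-ξ) ht htT
    rw [hkey t ht] at h1
    rw [hkey t ht, hkey T (le_trans ht htT.le)] at h2
    nlinarith
end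

section
/- Under the Setup with ψ(α) = α²/2, let 0 < t < T, let K ∈ (0,1), assume φ_s > 0 for all s and φ is strictly decreasing, and suppose ξ* ∈ ℝ satisfies P(t,T,ξ*) = K. Let μ denote the Gaussian measure on ℝ with mean 0 and variance t. Then ∫_ℝ max(∫_T^∞ ρ_s exp(φ_s x − φ_s² t/2) ds − K ∫_t^∞ ρ_s exp(φ_s x − φ_s² t/2) ds, 0) dμ(x) = ∫_T^∞ ρ_s N(ξ*/√t − φ_s √t) ds − K ∫_t^∞ ρ_s N(ξ*/√t − φ_s √t) ds, where N is the standard normal cumulative distribution function. -/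
open MeasureTheory Real

open ProbabilityTheory

/-- The standard normal cumulative distribution function. -/
noncomputable def stdNormalCDF (x : ℝ) : ℝ :=
  ∫ u in Set.Iic x, (Real.sqrt (2 * Real.pi))⁻¹ * Real.exp (-u ^ 2 / 2)


open Set
open scoped NNReal ENNReal

lemma integral_comp_div_sub_Iic (g : ℝ → ℝ) {σ : ℝ} (hσ : 0 < σ) (b c : ℝ) :
    ∫ x in Set.Iic c, g ((x - b) / σ) = σ * ∫ u in Set.Iic ((c - b) / σ), g u := by
  rw [← integral_indicator measurableSet_Iic, ← integral_indicator measurableSet_Iic]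
  have h1 : ∀ x : ℝ, (Set.Iic c).indicator (fun x => g ((x - b) / σ)) x
      = (Set.Iic ((c - b) / σ)).indicator g ((x - b) / σ) := by
    intro x
    have hiff : (x - b)/σ ≤ (c - b)/σ ↔ x ≤ c := by
      rw [div_le_div_iff_of_pos_right hσ]; constructor <;> intro <;> linarith
    simp only [Set.indicator_apply, Set.mem_Iic, hiff]
  simp_rw [h1]
  have h2 : (∫ x : ℝ, (Set.Iic ((c - b) / σ)).indicator g ((x - b) / σ))
      = ∫ x : ℝ, (Set.Iic ((c - b) / σ)).indicator g (x / σ) := by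
    simpa using integral_sub_right_eq_self (μ := volume)
      (fun x => (Set.Iic ((c - b) / σ)).indicator g (x / σ)) b
  rw [h2, MeasureTheory.Measure.integral_comp_div, abs_of_pos hσ, smul_eq_mul]

lemma gaussian_tilt {t : ℝ} (ht : 0 < t) (a x : ℝ) :
    gaussianPDFReal 0 t.toNNReal x * Real.exp (a * x - a ^ 2 * t / 2)
      = gaussianPDFReal (a * t) t.toNNReal x := by
  unfold gaussianPDFReal
  have hv : ((t.toNNReal : ℝ)) = t := Real.coe_toNNReal t ht.le
  rw [hv, mul_assoc, ← Real.exp_add]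
  congr 1
  field_simp
  ring

lemma gaussian_pdf_eq (t : ℝ) (ht : 0 < t) (m x : ℝ) :
    gaussianPDFReal m t.toNNReal x
      = (Real.sqrt t)⁻¹ * ((Real.sqrt (2 * Real.pi))⁻¹
          * Real.exp (-((x - m) / Real.sqrt t) ^ 2 / 2)) := by
  unfold gaussianPDFReal
  have hv : ((t.toNNReal : ℝ)) = t := Real.coe_toNNReal t ht.le
  rw [hv]
  have h2 : Real.sqrt (2 * Real.pi * t) = Real.sqrt (2 * Real.pi) * Real.sqrt t :=
    Real.sqrt_mul (by positivity) t
  have ht' : Real.sqrt t ≠ 0 := by positivity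
  rw [h2, mul_inv]
  have hexp : -(x - m) ^ 2 / (2 * t) = -((x - m) / Real.sqrt t) ^ 2 / 2 := by
    rw [div_pow, Real.sq_sqrt ht.le]
    field_simp
  rw [hexp]
  ring

lemma gaussian_Iic_tilt {t : ℝ} (ht : 0 < t) (a c : ℝ) :
    ∫ x in Set.Iic c, gaussianPDFReal 0 t.toNNReal x * Real.exp (a * x - a ^ 2 * t / 2)
      = stdNormalCDF (c / Real.sqrt t - a * Real.sqrt t) := by
  have hst : (0 : ℝ) < Real.sqrt t := Real.sqrt_pos.mpr ht
  calc ∫ x in Set.Iic c, gaussianPDFReal 0 t.toNNReal x * Real.exp (a * x - a ^ 2 * t / 2)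
      = ∫ x in Set.Iic c, gaussianPDFReal (a * t) t.toNNReal x := by
        refine setIntegral_congr_fun measurableSet_Iic fun x _ => gaussian_tilt ht a x
    _ = ∫ x in Set.Iic c, (Real.sqrt t)⁻¹ * ((Real.sqrt (2 * Real.pi))⁻¹
          * Real.exp (-((x - a * t) / Real.sqrt t) ^ 2 / 2)) := by
        refine setIntegral_congr_fun measurableSet_Iic fun x _ => gaussian_pdf_eq t ht _ x
    _ = (Real.sqrt t)⁻¹ * ∫ x in Set.Iic c, ((fun u => (Real.sqrt (2 * Real.pi))⁻¹
          * Real.exp (-u ^ 2 / 2)) ((x - a * t) / Real.sqrt t)) := by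
        rw [integral_const_mul]
    _ = (Real.sqrt t)⁻¹ * (Real.sqrt t * ∫ u in Set.Iic ((c - a * t) / Real.sqrt t),
          (Real.sqrt (2 * Real.pi))⁻¹ * Real.exp (-u ^ 2 / 2)) := by
        rw [show (∫ x in Set.Iic c, ((fun u => (Real.sqrt (2 * Real.pi))⁻¹ * Real.exp (-u ^ 2 / 2)) ((x - a * t) / Real.sqrt t))) = √t * ∫ u in Set.Iic ((c - a * t) / Real.sqrt t), (Real.sqrt (2 * Real.pi))⁻¹ * Real.exp (-u ^ 2 / 2) by simpa using integral_comp_div_sub_Iic (fun u => (Real.sqrt (2 * Real.pi))⁻¹ * Real.exp (-u ^ 2 / 2)) hst (a*t) c]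
    _ = stdNormalCDF ((c - a * t) / Real.sqrt t) := by
        rw [← mul_assoc, inv_mul_cancel₀ hst.ne', one_mul]; rfl
    _ = stdNormalCDF (c / Real.sqrt t - a * Real.sqrt t) := by
        congr 1
        rw [sub_div, mul_div_assoc, Real.div_sqrt]

lemma integrable_pdf_mul_exp {t : ℝ} (ht : 0 < t) (b : ℝ) :
    Integrable (fun x => gaussianPDFReal 0 t.toNNReal x * Real.exp (b * x)) := by
  have h : ∀ x, gaussianPDFReal 0 t.toNNReal x * Real.exp (b * x)
      = Real.exp (b ^ 2 * t / 2) * gaussianPDFReal (b * t) t.toNNReal x := by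
    intro x
    rw [← gaussian_tilt ht b x, mul_comm (Real.exp _), mul_assoc, ← Real.exp_add]
    ring_nf
  simp_rw [h]
  exact (integrable_gaussianPDFReal _ _).const_mul _

lemma integrable_pdf_mul_exp_abs {t : ℝ} (ht : 0 < t) (b : ℝ) :
    Integrable (fun x => gaussianPDFReal 0 t.toNNReal x * Real.exp (b * |x|)) := by
  refine Integrable.mono' ((integrable_pdf_mul_exp ht b).add (integrable_pdf_mul_exp ht (-b)))
    ?_ ?_
  · exact ((measurable_gaussianPDFReal _ _).aestronglyMeasurable.mul
      (((measurable_id.abs.const_mul b)).exp.aestronglyMeasurable))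
  · refine Filter.Eventually.of_forall fun x => ?_
    have h0 : 0 ≤ gaussianPDFReal 0 t.toNNReal x := gaussianPDFReal_nonneg _ _ _
    rw [Real.norm_eq_abs, abs_of_nonneg (by positivity)]
    have : Real.exp (b * |x|) ≤ Real.exp (b * x) + Real.exp (-b * x) := by
      rcases abs_cases x with ⟨h1, _⟩ | ⟨h1, _⟩
      · rw [h1]; nlinarith [Real.exp_pos (-b * x)]
      · rw [h1]; have : b * -x = -b * x := by ring
        rw [this]; nlinarith [Real.exp_pos (b * x)]
    simp only [Pi.add_apply]
    nlinarith [Real.exp_pos (b*x), Real.exp_pos (-b*x)]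

lemma integrableOn_piece (ρ φ : ℝ → ℝ) (hρc : ContinuousOn ρ (Set.Ioi 0))
    (hρnn : ∀ s ∈ Set.Ioi (0:ℝ), 0 ≤ ρ s) (hρint : IntegrableOn ρ (Set.Ioi 0))
    (hφc : ContinuousOn φ (Set.Ici 0)) {C : ℝ} (hC : ∀ s : ℝ, 0 ≤ s → |φ s| ≤ C)
    (t A x : ℝ) (ht : 0 < t) (hA : 0 < A) :
    IntegrableOn (fun s => ρ s * Real.exp (φ s * x - φ s ^ 2 * t / 2)) (Set.Ioi A) := by
  have hsub : Set.Ioi A ⊆ Set.Ioi (0:ℝ) := Set.Ioi_subset_Ioi hA.le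
  have hsub' : Set.Ioi A ⊆ Set.Ici (0:ℝ) := fun s hs => Set.mem_Ici.mpr (le_of_lt (hsub hs))
  have hφc' : ContinuousOn φ (Set.Ioi A) := hφc.mono hsub'
  have hcont : ContinuousOn (fun s => ρ s * Real.exp (φ s * x - φ s ^ 2 * t / 2))
      (Set.Ioi A) := by
    exact (hρc.mono hsub).mul
      (((hφc'.mul continuousOn_const).sub
        (((hφc'.pow 2).mul continuousOn_const).div_const 2)).rexp)
  refine Integrable.mono' ((hρint.mono_set hsub).mul_const (Real.exp (C * |x|)))
    (hcont.aestronglyMeasurable measurableSet_Ioi) ?_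
  refine (ae_restrict_iff' measurableSet_Ioi).mpr (Filter.Eventually.of_forall fun s hs => ?_)
  have hs0 : (0:ℝ) < s := hsub hs
  have hρs : 0 ≤ ρ s := hρnn s hs0
  rw [Real.norm_eq_abs, abs_of_nonneg (by positivity)]
  refine mul_le_mul_of_nonneg_left ?_ hρs
  refine Real.exp_le_exp.mpr ?_
  have h1 : φ s * x ≤ C * |x| := by
    calc φ s * x ≤ |φ s * x| := le_abs_self _
    _ = |φ s| * |x| := abs_mul _ _
    _ ≤ C * |x| := mul_le_mul_of_nonneg_right (hC s hs0.le) (abs_nonneg x)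
  nlinarith [sq_nonneg (φ s), ht.le]

lemma ratio_ineq (ρ φ : ℝ → ℝ) (hρc : ContinuousOn ρ (Set.Ioi 0))
    (hρnn : ∀ s ∈ Set.Ioi (0:ℝ), 0 ≤ ρ s) (hρint : IntegrableOn ρ (Set.Ioi 0))
    (hφc : ContinuousOn φ (Set.Ici 0)) {C : ℝ} (hC : ∀ s : ℝ, 0 ≤ s → |φ s| ≤ C)
    (hφanti : StrictAntiOn φ (Set.Ici 0))
    (t T : ℝ) (ht : 0 < t) (htT : t < T) (x y : ℝ) (hxy : x ≤ y) :
    (∫ s in Set.Ioi T, ρ s * Real.exp (φ s * y - φ s ^ 2 * t / 2)) *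
      (∫ s in Set.Ioi t, ρ s * Real.exp (φ s * x - φ s ^ 2 * t / 2))
    ≤ (∫ s in Set.Ioi T, ρ s * Real.exp (φ s * x - φ s ^ 2 * t / 2)) *
      (∫ s in Set.Ioi t, ρ s * Real.exp (φ s * y - φ s ^ 2 * t / 2)) := by
  set f : ℝ → ℝ → ℝ := fun z s => ρ s * Real.exp (φ s * z - φ s ^ 2 * t / 2) with hf
  have hT0 : (0:ℝ) < T := ht.trans htT
  -- integrability on Ioc t T
  have hIoc : ∀ z, IntegrableOn (f z) (Set.Ioc t T) := by
    intro z
    have hsub : Set.Icc t T ⊆ Set.Ici (0:ℝ) := fun s hs => le_trans ht.le hs.1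
    have hsub2 : Set.Icc t T ⊆ Set.Ioi (0:ℝ) := fun s hs => lt_of_lt_of_le ht hs.1
    have hcont : ContinuousOn (f z) (Set.Icc t T) :=
      (hρc.mono hsub2).mul
        ((((hφc.mono hsub).mul continuousOn_const).sub
          ((((hφc.mono hsub).pow 2).mul continuousOn_const).div_const 2)).rexp)
    exact (hcont.integrableOn_Icc).mono_set Set.Ioc_subset_Icc_self
  have hIoi : ∀ z, IntegrableOn (f z) (Set.Ioi T) := fun z =>
    integrableOn_piece ρ φ hρc hρnn hρint hφc hC t T z ht hT0
  have hsplit : ∀ z, (∫ s in Set.Ioi t, f z s)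
      = (∫ s in Set.Ioc t T, f z s) + ∫ s in Set.Ioi T, f z s := by
    intro z
    rw [← setIntegral_union (Set.Ioc_disjoint_Ioi le_rfl) measurableSet_Ioi (hIoc z) (hIoi z),
      Set.Ioc_union_Ioi_eq_Ioi htT.le]
  -- pointwise comparison
  have hpt : ∀ s ∈ Set.Ioi T, ∀ u ∈ Set.Ioc t T, f y s * f x u ≤ f x s * f y u := by
    intro s hs u hu
    have hs0 : (0:ℝ) ≤ s := (hT0.trans hs).le
    have hu0 : (0:ℝ) ≤ u := (ht.trans hu.1).le
    have hus : u < s := lt_of_le_of_lt hu.2 hs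
    have hφus : φ s ≤ φ u := (hφanti hu0 hs0 hus).le
    have e1 : f y s * f x u = ρ s * ρ u *
        Real.exp ((φ s * y - φ s ^ 2 * t / 2) + (φ u * x - φ u ^ 2 * t / 2)) := by
      rw [Real.exp_add]; simp only [hf]; ring
    have e2 : f x s * f y u = ρ s * ρ u *
        Real.exp ((φ s * x - φ s ^ 2 * t / 2) + (φ u * y - φ u ^ 2 * t / 2)) := by
      rw [Real.exp_add]; simp only [hf]; ring
    rw [e1, e2]
    refine mul_le_mul_of_nonneg_left (Real.exp_le_exp.mpr (by nlinarith)) ?_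
    exact mul_nonneg (hρnn _ (hT0.trans hs)) (hρnn _ (ht.trans hu.1))
  -- key inequality on the cross terms
  have hkey : (∫ s in Set.Ioi T, f y s) * (∫ u in Set.Ioc t T, f x u)
      ≤ (∫ s in Set.Ioi T, f x s) * (∫ u in Set.Ioc t T, f y u) := by
    rw [← integral_mul_const, ← integral_mul_const]
    refine setIntegral_mono_on ((hIoi y).mul_const _) ((hIoi x).mul_const _)
      measurableSet_Ioi ?_
    intro s hs
    rw [← integral_const_mul, ← integral_const_mul]
    refine setIntegral_mono_on ((hIoc x).const_mul _) ((hIoc y).const_mul _)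
      measurableSet_Ioc ?_
    intro u hu
    exact hpt s hs u hu
  rw [hsplit x, hsplit y]
  nlinarith [hkey]

lemma fubini_piece (ρ φ : ℝ → ℝ) (hρc : ContinuousOn ρ (Set.Ioi 0))
    (hρnn : ∀ s ∈ Set.Ioi (0:ℝ), 0 ≤ ρ s) (hρint : IntegrableOn ρ (Set.Ioi 0))
    (hρ1 : ∫ s in Set.Ioi (0:ℝ), ρ s = 1)
    (hφc : ContinuousOn φ (Set.Ici 0)) {C : ℝ} (hC : ∀ s : ℝ, 0 ≤ s → |φ s| ≤ C)
    (hC0 : 0 ≤ C) (t A ξ : ℝ) (ht : 0 < t) (hA : t ≤ A) :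
    Integrable (fun x => gaussianPDFReal 0 t.toNNReal x *
        ∫ s in Set.Ioi A, ρ s * Real.exp (φ s * x - φ s ^ 2 * t / 2))
      (volume.restrict (Set.Iic ξ))
    ∧ (∫ x in Set.Iic ξ, gaussianPDFReal 0 t.toNNReal x *
        ∫ s in Set.Ioi A, ρ s * Real.exp (φ s * x - φ s ^ 2 * t / 2))
      = ∫ s in Set.Ioi A, ρ s * stdNormalCDF (ξ / Real.sqrt t - φ s * Real.sqrt t) := by
  have hA0 : (0:ℝ) < A := lt_of_lt_of_le ht hA
  have hsub : Set.Ioi A ⊆ Set.Ioi (0:ℝ) := Set.Ioi_subset_Ioi hA0.le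
  have hsub' : Set.Ioi A ⊆ Set.Ici (0:ℝ) := fun s hs => Set.mem_Ici.mpr (le_of_lt (hsub hs))
  set μ0 := volume.restrict (Set.Iic ξ) with hμ0
  set ν := volume.restrict (Set.Ioi A) with hν
  set f : ℝ → ℝ → ℝ := fun x s =>
    gaussianPDFReal 0 t.toNNReal x * (ρ s * Real.exp (φ s * x - φ s ^ 2 * t / 2)) with hfdef
  -- measurability of the uncurried function
  have hρm : AEStronglyMeasurable ρ ν := ((hρc.mono hsub).aemeasurable measurableSet_Ioi).aestronglyMeasurable
  have hφm : AEStronglyMeasurable φ ν := ((hφc.mono hsub').aemeasurable measurableSet_Ioi).aestronglyMeasurable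
  have hpdfm : AEStronglyMeasurable (fun p : ℝ × ℝ => gaussianPDFReal 0 t.toNNReal p.1)
      (μ0.prod ν) :=
    ((measurable_gaussianPDFReal 0 t.toNNReal).comp measurable_fst).aestronglyMeasurable
  have hφm2 : AEStronglyMeasurable (fun p : ℝ × ℝ => φ p.2) (μ0.prod ν) := hφm.comp_snd
  have hxm : AEStronglyMeasurable (fun p : ℝ × ℝ => p.1) (μ0.prod ν) :=
    measurable_fst.aestronglyMeasurable
  have hexpm : AEStronglyMeasurable
      (fun p : ℝ × ℝ => Real.exp (φ p.2 * p.1 - φ p.2 ^ 2 * t / 2)) (μ0.prod ν) := by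
    have : AEStronglyMeasurable
        (fun p : ℝ × ℝ => φ p.2 * p.1 - φ p.2 ^ 2 * t / 2) (μ0.prod ν) := by
      have h2 : AEStronglyMeasurable (fun p : ℝ × ℝ => φ p.2 ^ 2 * t / 2) (μ0.prod ν) := by
        simpa only [pow_two, mul_div_assoc, Pi.mul_apply] using ((hφm2.mul hφm2).mul_const (t / 2))
      exact (hφm2.mul hxm).sub h2
    exact Real.continuous_exp.comp_aestronglyMeasurable this
  have hmeas : AEStronglyMeasurable (Function.uncurry f) (μ0.prod ν) := by
    exact hpdfm.mul (hρm.comp_snd.mul hexpm)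
  -- sections are integrable
  have hsec : ∀ x : ℝ, Integrable (f x) ν := by
    intro x
    exact (integrableOn_piece ρ φ hρc hρnn hρint hφc hC t A x ht hA0).const_mul _
  -- the outer integral function
  have hGeq : ∀ x : ℝ, (∫ s, f x s ∂ν)
      = gaussianPDFReal 0 t.toNNReal x *
          ∫ s in Set.Ioi A, ρ s * Real.exp (φ s * x - φ s ^ 2 * t / 2) := fun x =>
    integral_const_mul _ _
  have hFA_nonneg : ∀ x : ℝ, 0 ≤ ∫ s in Set.Ioi A, ρ s * Real.exp (φ s * x - φ s ^ 2 * t / 2) := by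
    intro x
    refine setIntegral_nonneg measurableSet_Ioi fun s hs => ?_
    exact mul_nonneg (hρnn s (hsub hs)) (Real.exp_nonneg _)
  have hFA_le : ∀ x : ℝ, (∫ s in Set.Ioi A, ρ s * Real.exp (φ s * x - φ s ^ 2 * t / 2))
      ≤ Real.exp (C * |x|) := by
    intro x
    have h1 : (∫ s in Set.Ioi A, ρ s * Real.exp (φ s * x - φ s ^ 2 * t / 2))
        ≤ ∫ s in Set.Ioi A, ρ s * Real.exp (C * |x|) := by
      refine setIntegral_mono_on
        (integrableOn_piece ρ φ hρc hρnn hρint hφc hC t A x ht hA0)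
        ((hρint.mono_set hsub).mul_const _) measurableSet_Ioi ?_
      intro s hs
      have hs0 : (0:ℝ) < s := hsub hs
      refine mul_le_mul_of_nonneg_left (Real.exp_le_exp.mpr ?_) (hρnn s hs0)
      have h1 : φ s * x ≤ C * |x| := by
        calc φ s * x ≤ |φ s * x| := le_abs_self _
        _ = |φ s| * |x| := abs_mul _ _
        _ ≤ C * |x| := mul_le_mul_of_nonneg_right (hC s hs0.le) (abs_nonneg x)
      nlinarith [sq_nonneg (φ s), ht.le]
    have h2 : (∫ s in Set.Ioi A, ρ s * Real.exp (C * |x|))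
        ≤ Real.exp (C * |x|) := by
      rw [integral_mul_const]
      have h3 : (∫ s in Set.Ioi A, ρ s) ≤ ∫ s in Set.Ioi (0:ℝ), ρ s := by
        refine setIntegral_mono_set hρint ?_ hsub.eventuallyLE
        exact (ae_restrict_iff' measurableSet_Ioi).mpr (ae_of_all _ hρnn)
      rw [hρ1] at h3
      nlinarith [Real.exp_pos (C * |x|)]
    linarith
  have hnormeq : ∀ x : ℝ, (∫ s, ‖f x s‖ ∂ν) = ∫ s, f x s ∂ν := by
    intro x
    refine setIntegral_congr_fun measurableSet_Ioi fun s hs => ?_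
    rw [Real.norm_eq_abs, abs_of_nonneg]
    exact mul_nonneg (gaussianPDFReal_nonneg _ _ _)
      (mul_nonneg (hρnn s (hsub hs)) (Real.exp_nonneg _))
  have hGm : AEStronglyMeasurable (fun x => ∫ s, f x s ∂ν) μ0 := hmeas.integral_prod_right'
  have hGint : Integrable (fun x => ∫ s, f x s ∂ν) μ0 := by
    refine Integrable.mono' ((integrable_pdf_mul_exp_abs ht C).restrict) hGm ?_
    refine ae_of_all _ fun x => ?_
    rw [hGeq x, Real.norm_eq_abs,
      abs_of_nonneg (mul_nonneg (gaussianPDFReal_nonneg _ _ _) (hFA_nonneg x))]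
    exact mul_le_mul_of_nonneg_left (hFA_le x) (gaussianPDFReal_nonneg _ _ _)
  have hFint : Integrable (Function.uncurry f) (μ0.prod ν) :=
    (integrable_prod_iff hmeas).mpr
      ⟨ae_of_all _ hsec, hGint.congr (ae_of_all _ fun x => (hnormeq x).symm)⟩
  constructor
  · exact hGint.congr (ae_of_all _ hGeq)
  · calc (∫ x in Set.Iic ξ, gaussianPDFReal 0 t.toNNReal x *
        ∫ s in Set.Ioi A, ρ s * Real.exp (φ s * x - φ s ^ 2 * t / 2))
        = ∫ x, (∫ s, f x s ∂ν) ∂μ0 :=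
          integral_congr_ae (ae_of_all _ fun x => (hGeq x).symm)
      _ = ∫ s, (∫ x, f x s ∂μ0) ∂ν := integral_integral_swap hFint
      _ = ∫ s in Set.Ioi A, ρ s * stdNormalCDF (ξ / Real.sqrt t - φ s * Real.sqrt t) := by
          refine setIntegral_congr_fun measurableSet_Ioi fun s hs => ?_
          have h1 : ∀ x : ℝ, f x s = ρ s *
              (gaussianPDFReal 0 t.toNNReal x * Real.exp (φ s * x - φ s ^ 2 * t / 2)) := by
            intro x; simp only [hfdef]; ring
          calc (∫ x, f x s ∂μ0)
              = ρ s * ∫ x in Set.Iic ξ, gaussianPDFReal 0 t.toNNReal x *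
                  Real.exp (φ s * x - φ s ^ 2 * t / 2) := by
                rw [show (fun x => f x s) = fun x => ρ s *
                    (gaussianPDFReal 0 t.toNNReal x * Real.exp (φ s * x - φ s ^ 2 * t / 2))
                  from funext h1]
                exact integral_const_mul _ _
            _ = ρ s * stdNormalCDF (ξ / Real.sqrt t - φ s * Real.sqrt t) := by
                rw [gaussian_Iic_tilt ht (φ s) ξ]

/-- Bond option pricing formula in the geometric Brownian motion family: with
`ξ*` the critical level solving `P(t,T,ξ*) = K`, the option payoff expectation
is given by the semi-analytic formula involving the normal CDF. -/
theorem bond_option_price_GBM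
    (ρ φ : ℝ → ℝ)
    (hρc : ContinuousOn ρ (Set.Ioi 0)) (hρpos : ∀ s : ℝ, 0 < s → 0 < ρ s)
    (hρint : ∫ s in Set.Ioi (0 : ℝ), ρ s = 1)
    (hφc : ContinuousOn φ (Set.Ici 0)) (hφb : ∃ C : ℝ, ∀ s : ℝ, 0 ≤ s → |φ s| ≤ C)
    (hφpos : ∀ s : ℝ, 0 ≤ s → 0 < φ s) (hφanti : StrictAntiOn φ (Set.Ici 0))
    (t T K : ℝ) (ht : 0 < t) (htT : t < T) (hK : K ∈ Set.Ioo (0 : ℝ) 1)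
    (ξstar : ℝ) (hξstar : Pfun ρ φ (fun α => α ^ 2 / 2) t T ξstar = K) :
    ∫ x, max ((∫ s in Set.Ioi T, ρ s * Real.exp (φ s * x - φ s ^ 2 * t / 2))
          - K * ∫ s in Set.Ioi t, ρ s * Real.exp (φ s * x - φ s ^ 2 * t / 2)) 0
        ∂(gaussianReal 0 t.toNNReal)
      = (∫ s in Set.Ioi T,
            ρ s * stdNormalCDF (ξstar / Real.sqrt t - φ s * Real.sqrt t))
        - K * ∫ s in Set.Ioi t,
            ρ s * stdNormalCDF (ξstar / Real.sqrt t - φ s * Real.sqrt t) := by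
  obtain ⟨C₀, hC₀⟩ := hφb
  set C : ℝ := max C₀ 0 with hCdef
  have hC : ∀ s : ℝ, 0 ≤ s → |φ s| ≤ C := fun s hs => (hC₀ s hs).trans (le_max_left _ _)
  have hC0 : (0:ℝ) ≤ C := le_max_right _ _
  have hρnn : ∀ s ∈ Set.Ioi (0:ℝ), 0 ≤ ρ s := fun s hs => (hρpos s hs).le
  have hρint' : IntegrableOn ρ (Set.Ioi 0) := by
    by_contra h
    rw [MeasureTheory.integral_undef h] at hρint
    exact one_ne_zero hρint.symm
  have hv : t.toNNReal ≠ 0 := by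
    simp only [ne_eq, Real.toNNReal_eq_zero, not_le]
    exact ht
  set pdf : ℝ → ℝ := gaussianPDFReal 0 t.toNNReal with hpdfdef
  set FT : ℝ → ℝ := fun x => ∫ s in Set.Ioi T, ρ s * Real.exp (φ s * x - φ s ^ 2 * t / 2)
    with hFT
  set Ft : ℝ → ℝ := fun x => ∫ s in Set.Ioi t, ρ s * Real.exp (φ s * x - φ s ^ 2 * t / 2)
    with hFt
  show (∫ x, max (FT x - K * Ft x) 0 ∂(gaussianReal 0 t.toNNReal))
      = (∫ s in Set.Ioi T, ρ s * stdNormalCDF (ξstar / Real.sqrt t - φ s * Real.sqrt t))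
        - K * ∫ s in Set.Ioi t, ρ s * stdNormalCDF (ξstar / Real.sqrt t - φ s * Real.sqrt t)
  -- positivity of Ft
  have hFtpos : ∀ x : ℝ, 0 < Ft x := by
    intro x
    have hint := integrableOn_piece ρ φ hρc hρnn hρint' hφc hC t t x ht ht
    rw [hFt]
    refine (setIntegral_pos_iff_support_of_nonneg_ae ?_ hint).mpr ?_
    · refine (ae_restrict_iff' measurableSet_Ioi).mpr (ae_of_all _ fun s hs => ?_)
      exact mul_nonneg (hρnn s (lt_trans ht hs)) (Real.exp_nonneg _)
    · have hsup : Set.Ioi t ⊆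
          Function.support (fun s => ρ s * Real.exp (φ s * x - φ s ^ 2 * t / 2))
            ∩ Set.Ioi t := fun s hs =>
        ⟨ne_of_gt (mul_pos (hρpos s (ht.trans hs)) (Real.exp_pos _)), hs⟩
      refine lt_of_lt_of_le ?_ (measure_mono hsup)
      rw [Real.volume_Ioi]
      exact ENNReal.zero_lt_top
  -- relation between Dfun and FT/Ft
  have hDT : Dfun ρ φ (fun α => α ^ 2 / 2) t T ξstar = FT ξstar := by
    rw [hFT]
    exact setIntegral_congr_fun measurableSet_Ioi fun s _ => by rw [div_mul_eq_mul_div]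
  have hDt : Dfun ρ φ (fun α => α ^ 2 / 2) t t ξstar = Ft ξstar := by
    rw [hFt]
    exact setIntegral_congr_fun measurableSet_Ioi fun s _ => by rw [div_mul_eq_mul_div]
  have hKey : FT ξstar = K * Ft ξstar := by
    have h := hξstar
    unfold Pfun at h
    rw [hDT, hDt, div_eq_iff (hFtpos ξstar).ne'] at h
    linarith [h]
  -- sign analysis
  have hsign : ∀ x : ℝ, max (FT x - K * Ft x) 0
      = (Set.Iic ξstar).indicator (fun x => FT x - K * Ft x) x := by
    intro x
    rw [Set.indicator_apply]
    by_cases hx : x ∈ Set.Iic ξstar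
    · rw [if_pos hx]
      apply max_eq_left
      have hr : FT ξstar * Ft x ≤ FT x * Ft ξstar :=
        ratio_ineq ρ φ hρc hρnn hρint' hφc hC hφanti t T ht htT x ξstar hx
      nlinarith [hFtpos x, hFtpos ξstar]
    · rw [if_neg hx]
      apply max_eq_right
      have hx' : ξstar ≤ x := le_of_not_ge (fun h => hx (Set.mem_Iic.mpr h))
      have hr : FT x * Ft ξstar ≤ FT ξstar * Ft x :=
        ratio_ineq ρ φ hρc hρnn hρint' hφc hC hφanti t T ht htT ξstar x hx'
      nlinarith [hFtpos x, hFtpos ξstar]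
  -- fubini pieces
  have hT2 := fubini_piece ρ φ hρc hρnn hρint' hρint hφc hC hC0 t T ξstar ht htT.le
  have ht2 := fubini_piece ρ φ hρc hρnn hρint' hρint hφc hC hC0 t t ξstar ht le_rfl
  have hT2a : Integrable (fun x => pdf x * FT x) (volume.restrict (Set.Iic ξstar)) := hT2.1
  have hT2b : (∫ x in Set.Iic ξstar, pdf x * FT x)
      = ∫ s in Set.Ioi T, ρ s * stdNormalCDF (ξstar / Real.sqrt t - φ s * Real.sqrt t) :=
    hT2.2
  have ht2a : Integrable (fun x => pdf x * Ft x) (volume.restrict (Set.Iic ξstar)) := ht2.1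
  have ht2b : (∫ x in Set.Iic ξstar, pdf x * Ft x)
      = ∫ s in Set.Ioi t, ρ s * stdNormalCDF (ξstar / Real.sqrt t - φ s * Real.sqrt t) :=
    ht2.2
  calc (∫ x, max (FT x - K * Ft x) 0 ∂(gaussianReal 0 t.toNNReal))
      = ∫ x, (Set.Iic ξstar).indicator (fun x => FT x - K * Ft x) x
          ∂(gaussianReal 0 t.toNNReal) := integral_congr_ae (ae_of_all _ hsign)
    _ = ∫ x in Set.Iic ξstar, (FT x - K * Ft x) ∂(gaussianReal 0 t.toNNReal) :=
        integral_indicator measurableSet_Iic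
    _ = ∫ x in Set.Iic ξstar, pdf x * (FT x - K * Ft x) := by
        rw [gaussianReal_of_var_ne_zero 0 hv, restrict_withDensity measurableSet_Iic]
        rw [show gaussianPDF 0 t.toNNReal
            = fun x => ((Real.toNNReal (pdf x) : ℝ≥0) : ℝ≥0∞) from rfl]
        rw [integral_withDensity_eq_integral_smul
          ((measurable_gaussianPDFReal 0 t.toNNReal).real_toNNReal) _]
        refine integral_congr_ae (ae_of_all _ fun x => ?_)
        simp only [NNReal.smul_def, Real.coe_toNNReal _ (gaussianPDFReal_nonneg 0 t.toNNReal x), smul_eq_mul]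
        rfl
    _ = (∫ x in Set.Iic ξstar, pdf x * FT x) - K * ∫ x in Set.Iic ξstar, pdf x * Ft x := by
        rw [show (fun x => pdf x * (FT x - K * Ft x))
            = fun x => pdf x * FT x - K * (pdf x * Ft x) from funext fun x => by ring]
        rw [integral_sub hT2a (ht2a.const_mul K), integral_const_mul]
    _ = (∫ s in Set.Ioi T, ρ s * stdNormalCDF (ξstar / Real.sqrt t - φ s * Real.sqrt t))
        - K * ∫ s in Set.Ioi t,
            ρ s * stdNormalCDF (ξstar / Real.sqrt t - φ s * Real.sqrt t) := by
        rw [hT2b, ht2b]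
end

section
/- Let ρ : (0,∞) → (0,∞) be continuous with ∫_0^∞ ρ_s ds = 1, let φ : [0,∞) → ℝ be continuous, bounded, strictly increasing, and satisfy φ_s < 0 for all s. Let m > 0, κ > 0, 0 < t < T, K ∈ (0,1), and suppose ξ* > 0 satisfies P_γ(t,T,ξ*) = K, where P_γ(t,T,ξ) = (∫_T^∞ ρ_s (1 − κφ_s)^{mt} e^{φ_s ξ} ds)/(∫_t^∞ ρ_s (1 − κφ_s)^{mt} e^{φ_s ξ} ds). Let ν be the Gamma distribution with shape mt and scale κ. Then ∫_0^∞ max(∫_T^∞ ρ_s (1 − κφ_s)^{mt} e^{φ_s u} ds − K ∫_t^∞ ρ_s (1 − κφ_s)^{mt} e^{φ_s u} ds, 0) dν(u) = ∫_T^∞ ρ_s Γ(mt, ξ*(κ^{−1} − φ_s)) ds − K ∫_t^∞ ρ_s Γ(mt, ξ*(κ^{−1} − φ_s)) ds, where Γ(a,x) = (1/Γ(a)) ∫_x^∞ v^{a−1} e^{−v} dv is the normalized upper incomplete gamma function. -/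
open MeasureTheory ProbabilityTheory Real

/-- The normalized upper incomplete gamma function
`Γ(a, x) = (1/Γ a) ∫_x^∞ v^(a-1) e^(-v) dv`. -/
noncomputable def upperIncGamma (a x : ℝ) : ℝ :=
  (Real.Gamma a)⁻¹ * ∫ v in Set.Ioi x, v ^ (a - 1) * Real.exp (-v)

/-- The bond price function in the geometric gamma model. -/
noncomputable def PgammaFun (ρ φ : ℝ → ℝ) (m κ t T ξ : ℝ) : ℝ :=
  (∫ s in Set.Ioi T, ρ s * (1 - κ * φ s) ^ (m * t) * Real.exp (φ s * ξ)) /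
    ∫ s in Set.Ioi t, ρ s * (1 - κ * φ s) ^ (m * t) * Real.exp (φ s * ξ)

open scoped ENNReal NNReal

private lemma gamma_density_integral {a r : ℝ} (ha : 0 < a) (hr : 0 < r)
    (f : ℝ → ℝ) {s : Set ℝ} (hs : MeasurableSet s) :
    ∫ u in s, f u ∂(gammaMeasure a r) = ∫ u in s, gammaPDFReal a r u * f u := by
  have h : gammaMeasure a r
      = volume.withDensity (fun x => ((gammaPDFReal a r x).toNNReal : ℝ≥0∞)) := rfl
  rw [h, setIntegral_withDensity_eq_setIntegral_smul
      (measurable_gammaPDFReal a r).real_toNNReal f hs]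
  refine setIntegral_congr_fun hs fun x _ => ?_
  simp [NNReal.smul_def, Real.coe_toNNReal _ (gammaPDFReal_nonneg ha hr x)]

private lemma gamma_exp_integral {a r c x0 : ℝ} (ha : 0 < a) (hr : 0 < r)
    (hc : c < 0) (hx0 : 0 < x0) :
    ∫ u in Set.Ici x0, Real.exp (c * u) ∂(gammaMeasure a r)
      = (r / (r - c)) ^ a * upperIncGamma a (x0 * (r - c)) := by
  have hb : 0 < r - c := by linarith
  rw [gamma_density_integral ha hr _ measurableSet_Ici, integral_Ici_eq_integral_Ioi]
  have h1 : ∀ u ∈ Set.Ioi x0, gammaPDFReal a r u * Real.exp (c * u)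
      = (r ^ a / Real.Gamma a) * (u ^ (a-1) * Real.exp (-((r - c) * u))) := by
    intro u hu
    have hu0 : 0 < u := hx0.trans hu
    rw [gammaPDFReal, if_pos hu0.le,
      show (-((r-c)*u)) = -(r*u) + c*u by ring, Real.exp_add]
    ring
  rw [setIntegral_congr_fun measurableSet_Ioi h1, integral_const_mul]
  have hcv := integral_comp_mul_left_Ioi (fun x => x ^ (a-1) * Real.exp (-x)) x0 hb
  simp only [smul_eq_mul] at hcv
  have h2 : (∫ x in Set.Ioi x0, (fun x => x ^ (a-1) * Real.exp (-x)) ((r-c) * x))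
      = (r-c) ^ (a-1) * ∫ x in Set.Ioi x0, x ^ (a-1) * Real.exp (-((r-c) * x)) := by
    rw [← integral_const_mul]
    refine setIntegral_congr_fun measurableSet_Ioi fun x hx => ?_
    have hx0' : 0 < x := hx0.trans hx
    simp only
    rw [Real.mul_rpow hb.le hx0'.le]
    ring
  rw [h2] at hcv
  have hbne : (r-c) ^ (a-1) ≠ 0 := (Real.rpow_pos_of_pos hb _).ne'
  have hI : (∫ x in Set.Ioi x0, x ^ (a-1) * Real.exp (-((r-c)*x)))
      = ((r-c) ^ (a-1))⁻¹ * ((r-c)⁻¹ * ∫ x in Set.Ioi ((r-c) * x0), x ^ (a-1) * Real.exp (-x)) := by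
    rw [← hcv]
    field_simp
  rw [hI, upperIncGamma]
  have hba : (r - c) ^ a = (r-c) ^ (a-1) * (r - c) := by
    rw [← Real.rpow_add_one hb.ne' (a-1)]
    norm_num
  rw [show x0 * (r-c) = (r-c) * x0 from mul_comm _ _, Real.div_rpow hr.le hb.le, hba]
  have hg : Real.Gamma a ≠ 0 := (Real.Gamma_pos_of_pos ha).ne'
  field_simp

/-- Bond option pricing formula in the geometric gamma family: with `ξ* > 0`
solving `P_γ(t,T,ξ*) = K`, the option payoff expectation under the Gamma
distribution with shape `m t` and scale `κ` (i.e. rate `κ⁻¹`) is given by the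
semi-analytic formula involving the normalized upper incomplete gamma
function. -/
theorem bond_option_price_gamma
    (ρ φ : ℝ → ℝ)
    (hρc : ContinuousOn ρ (Set.Ioi 0)) (hρpos : ∀ s : ℝ, 0 < s → 0 < ρ s)
    (hρint : ∫ s in Set.Ioi (0 : ℝ), ρ s = 1)
    (hφc : ContinuousOn φ (Set.Ici 0)) (hφb : ∃ C : ℝ, ∀ s : ℝ, 0 ≤ s → |φ s| ≤ C)
    (hφmono : StrictMonoOn φ (Set.Ici 0)) (hφneg : ∀ s : ℝ, 0 ≤ s → φ s < 0)
    (m κ t T K : ℝ) (hm : 0 < m) (hκ : 0 < κ)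
    (ht : 0 < t) (htT : t < T) (hK : K ∈ Set.Ioo (0 : ℝ) 1)
    (ξstar : ℝ) (hξpos : 0 < ξstar) (hξstar : PgammaFun ρ φ m κ t T ξstar = K) :
    ∫ u, max ((∫ s in Set.Ioi T, ρ s * (1 - κ * φ s) ^ (m * t) * Real.exp (φ s * u))
          - K * ∫ s in Set.Ioi t, ρ s * (1 - κ * φ s) ^ (m * t) * Real.exp (φ s * u)) 0
        ∂(gammaMeasure (m * t) κ⁻¹)
      = (∫ s in Set.Ioi T, ρ s * upperIncGamma (m * t) (ξstar * (κ⁻¹ - φ s)))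
        - K * ∫ s in Set.Ioi t, ρ s * upperIncGamma (m * t) (ξstar * (κ⁻¹ - φ s)) := by
  obtain ⟨C, hC⟩ := hφb
  have hC0 : (0:ℝ) ≤ C := (abs_nonneg _).trans (hC 0 le_rfl)
  have ha : 0 < m * t := mul_pos hm ht
  have hr : (0:ℝ) < κ⁻¹ := inv_pos.mpr hκ
  have hT0 : (0:ℝ) < T := ht.trans htT
  have h1κC : (0:ℝ) < 1 + κ * C := by nlinarith
  haveI hprob : IsProbabilityMeasure (gammaMeasure (m * t) κ⁻¹) :=
    isProbabilityMeasure_gammaMeasure ha hr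
  have hbase : ∀ s : ℝ, 0 ≤ s → 0 < 1 - κ * φ s := by
    intro s hs
    have := hφneg s hs
    nlinarith
  have hρInt : IntegrableOn ρ (Set.Ioi 0) := by
    by_contra h
    rw [integral_undef h] at hρint
    exact one_ne_zero hρint.symm
  have hgcont : ∀ u : ℝ, ContinuousOn
      (fun s => ρ s * (1 - κ * φ s) ^ (m * t) * Real.exp (φ s * u)) (Set.Ioi 0) := by
    intro u
    have hφc' : ContinuousOn φ (Set.Ioi 0) := hφc.mono Set.Ioi_subset_Ici_self
    exact (hρc.mul ((continuousOn_const.sub (continuousOn_const.mul hφc')).rpow_const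
        (fun s hs => Or.inl (hbase s (le_of_lt hs)).ne'))).mul
      (Real.continuous_exp.comp_continuousOn (hφc'.mul continuousOn_const))
  have hgpos : ∀ u : ℝ, ∀ s : ℝ, 0 < s →
      0 < ρ s * (1 - κ * φ s) ^ (m * t) * Real.exp (φ s * u) := fun u s hs =>
    mul_pos (mul_pos (hρpos s hs) (Real.rpow_pos_of_pos (hbase s hs.le) _)) (Real.exp_pos _)
  have hrpow_le : ∀ s : ℝ, 0 ≤ s → (1 - κ * φ s) ^ (m * t) ≤ (1 + κ * C) ^ (m * t) := by
    intro s hs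
    refine Real.rpow_le_rpow (hbase s hs).le ?_ ha.le
    have := (abs_le.mp (hC s hs)).1
    nlinarith
  have hgint : ∀ (u b : ℝ), 0 < b → IntegrableOn
      (fun s => ρ s * (1 - κ * φ s) ^ (m * t) * Real.exp (φ s * u)) (Set.Ioi b) := by
    intro u b hb
    have hsub : Set.Ioi b ⊆ Set.Ioi 0 := Set.Ioi_subset_Ioi hb.le
    refine Integrable.mono
      ((hρInt.mono_set hsub).mul_const ((1 + κ * C) ^ (m * t) * Real.exp (C * |u|)))
      (((hgcont u).mono hsub).aestronglyMeasurable measurableSet_Ioi) ?_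
    rw [ae_restrict_iff' measurableSet_Ioi]
    refine ae_of_all _ fun s hs => ?_
    have hs0 : 0 < s := hb.trans hs
    have he : Real.exp (φ s * u) ≤ Real.exp (C * |u|) := by
      refine Real.exp_le_exp.mpr ?_
      calc φ s * u ≤ |φ s * u| := le_abs_self _
        _ = |φ s| * |u| := abs_mul _ _
        _ ≤ C * |u| := mul_le_mul_of_nonneg_right (hC s hs0.le) (abs_nonneg _)
    have h1 : ρ s * (1 - κ * φ s) ^ (m * t) * Real.exp (φ s * u)
        ≤ ρ s * ((1 + κ * C) ^ (m * t) * Real.exp (C * |u|)) := by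
      calc ρ s * (1 - κ * φ s) ^ (m * t) * Real.exp (φ s * u)
          ≤ ρ s * (1 + κ * C) ^ (m * t) * Real.exp (C * |u|) :=
            mul_le_mul (mul_le_mul_of_nonneg_left (hrpow_le s hs0.le) (hρpos s hs0).le)
              he (Real.exp_pos _).le
              (mul_nonneg (hρpos s hs0).le (Real.rpow_pos_of_pos h1κC _).le)
        _ = ρ s * ((1 + κ * C) ^ (m * t) * Real.exp (C * |u|)) := by ring
    rw [Real.norm_eq_abs, Real.norm_eq_abs, abs_of_pos (hgpos u s hs0), abs_of_nonneg
      (mul_nonneg (hρpos s hs0).le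
        (mul_nonneg (Real.rpow_pos_of_pos h1κC _).le (Real.exp_pos _).le))]
    exact h1
  -- indicator form
  have hindint : ∀ u : ℝ, Integrable
      (Set.indicator (Set.Ioi T)
        (fun s => ρ s * (1 - κ * φ s) ^ (m * t) * Real.exp (φ s * u)))
      (volume.restrict (Set.Ioi t)) :=
    fun u => (hgint u t ht).indicator measurableSet_Ioi
  have hindeq : ∀ u : ℝ, (∫ s in Set.Ioi t, Set.indicator (Set.Ioi T)
        (fun s => ρ s * (1 - κ * φ s) ^ (m * t) * Real.exp (φ s * u)) s)
      = ∫ s in Set.Ioi T, ρ s * (1 - κ * φ s) ^ (m * t) * Real.exp (φ s * u) := by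
    intro u
    rw [integral_indicator measurableSet_Ioi, Measure.restrict_restrict measurableSet_Ioi,
      Set.Ioi_inter_Ioi, sup_eq_left.mpr htT.le]
  have hFint : ∀ u : ℝ, Integrable (fun s =>
      Real.exp (-(φ T) * u) * (Set.indicator (Set.Ioi T)
        (fun s' => ρ s' * (1 - κ * φ s') ^ (m * t) * Real.exp (φ s' * u)) s
        - K * (ρ s * (1 - κ * φ s) ^ (m * t) * Real.exp (φ s * u))))
      (volume.restrict (Set.Ioi t)) :=
    fun u => (((hindint u).sub ((hgint u t ht).const_mul K)).const_mul _)
  have hFeq : ∀ u : ℝ, (∫ s in Set.Ioi t, Real.exp (-(φ T) * u) *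
      (Set.indicator (Set.Ioi T)
        (fun s' => ρ s' * (1 - κ * φ s') ^ (m * t) * Real.exp (φ s' * u)) s
        - K * (ρ s * (1 - κ * φ s) ^ (m * t) * Real.exp (φ s * u))))
      = Real.exp (-(φ T) * u) *
        ((∫ s in Set.Ioi T, ρ s * (1 - κ * φ s) ^ (m * t) * Real.exp (φ s * u))
          - K * ∫ s in Set.Ioi t, ρ s * (1 - κ * φ s) ^ (m * t) * Real.exp (φ s * u)) := by
    intro u
    rw [integral_const_mul, integral_sub (hindint u) ((hgint u t ht).const_mul K),
      integral_const_mul, hindeq u]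
  have hFmono : ∀ u₁ u₂ : ℝ, u₁ ≤ u₂ → ∀ s ∈ Set.Ioi t,
      Real.exp (-(φ T) * u₁) * (Set.indicator (Set.Ioi T)
        (fun s' => ρ s' * (1 - κ * φ s') ^ (m * t) * Real.exp (φ s' * u₁)) s
        - K * (ρ s * (1 - κ * φ s) ^ (m * t) * Real.exp (φ s * u₁)))
      ≤ Real.exp (-(φ T) * u₂) * (Set.indicator (Set.Ioi T)
        (fun s' => ρ s' * (1 - κ * φ s') ^ (m * t) * Real.exp (φ s' * u₂)) s
        - K * (ρ s * (1 - κ * φ s) ^ (m * t) * Real.exp (φ s * u₂))) := by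
    intro u1 u2 hu s hs
    have hs0 : 0 < s := ht.trans hs
    have hcoe : 0 < ρ s * (1 - κ * φ s) ^ (m * t) :=
      mul_pos (hρpos s hs0) (Real.rpow_pos_of_pos (hbase s hs0.le) _)
    have hkey : ∀ u : ℝ, Real.exp (-(φ T) * u) * (Set.indicator (Set.Ioi T)
        (fun s' => ρ s' * (1 - κ * φ s') ^ (m * t) * Real.exp (φ s' * u)) s
        - K * (ρ s * (1 - κ * φ s) ^ (m * t) * Real.exp (φ s * u)))
        = ((if T < s then (1:ℝ) else 0) - K) * (ρ s * (1 - κ * φ s) ^ (m * t))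
          * Real.exp ((φ s - φ T) * u) := by
      intro u
      by_cases hsT : T < s
      · rw [Set.indicator_of_mem (Set.mem_Ioi.mpr hsT), if_pos hsT,
          show (φ s - φ T) * u = -(φ T) * u + φ s * u by ring, Real.exp_add]
        ring
      · rw [Set.indicator_of_notMem (by simpa using hsT), if_neg hsT,
          show (φ s - φ T) * u = -(φ T) * u + φ s * u by ring, Real.exp_add]
        ring
    rw [hkey u1, hkey u2]
    by_cases hsT : T < s
    · rw [if_pos hsT]
      have hφTs : φ T ≤ φ s := (hφmono hT0.le (le_of_lt hs0) hsT).le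
      have hcoef : 0 ≤ ((1:ℝ) - K) * (ρ s * (1 - κ * φ s) ^ (m * t)) :=
        mul_nonneg (by linarith [hK.2]) hcoe.le
      exact mul_le_mul_of_nonneg_left (Real.exp_le_exp.mpr
        (mul_le_mul_of_nonneg_left hu (sub_nonneg.mpr hφTs))) hcoef
    · rw [if_neg hsT]
      have hsT' : s ≤ T := le_of_not_gt hsT
      have hφsT : φ s ≤ φ T := hφmono.monotoneOn (le_of_lt hs0) hT0.le hsT'
      have hcoef : ((0:ℝ) - K) * (ρ s * (1 - κ * φ s) ^ (m * t)) ≤ 0 :=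
        mul_nonpos_of_nonpos_of_nonneg (by linarith [hK.1]) hcoe.le
      exact mul_le_mul_of_nonpos_left (Real.exp_le_exp.mpr
        (mul_le_mul_of_nonpos_left hu (by linarith))) hcoef
  have hintmono : ∀ u₁ u₂ : ℝ, u₁ ≤ u₂ →
      Real.exp (-(φ T) * u₁) *
        ((∫ s in Set.Ioi T, ρ s * (1 - κ * φ s) ^ (m * t) * Real.exp (φ s * u₁))
          - K * ∫ s in Set.Ioi t, ρ s * (1 - κ * φ s) ^ (m * t) * Real.exp (φ s * u₁))
      ≤ Real.exp (-(φ T) * u₂) *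
        ((∫ s in Set.Ioi T, ρ s * (1 - κ * φ s) ^ (m * t) * Real.exp (φ s * u₂))
          - K * ∫ s in Set.Ioi t, ρ s * (1 - κ * φ s) ^ (m * t) * Real.exp (φ s * u₂)) := by
    intro u1 u2 hu
    rw [← hFeq u1, ← hFeq u2]
    exact integral_mono_ae (hFint u1) (hFint u2)
      ((ae_restrict_iff' measurableSet_Ioi).mpr (ae_of_all _ (hFmono u1 u2 hu)))
  have hfstar : (∫ s in Set.Ioi T, ρ s * (1 - κ * φ s) ^ (m * t) * Real.exp (φ s * ξstar))
      - K * (∫ s in Set.Ioi t, ρ s * (1 - κ * φ s) ^ (m * t) * Real.exp (φ s * ξstar))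
      = 0 := by
    rw [PgammaFun] at hξstar
    rcases eq_or_ne
      (∫ s in Set.Ioi t, ρ s * (1 - κ * φ s) ^ (m * t) * Real.exp (φ s * ξstar)) 0 with h | h
    · rw [h, div_zero] at hξstar
      exact absurd hξstar.symm (ne_of_gt hK.1)
    · rw [div_eq_iff h] at hξstar
      rw [hξstar]; ring
  have hsignpos : ∀ u : ℝ, ξstar ≤ u →
      0 ≤ (∫ s in Set.Ioi T, ρ s * (1 - κ * φ s) ^ (m * t) * Real.exp (φ s * u))
        - K * ∫ s in Set.Ioi t, ρ s * (1 - κ * φ s) ^ (m * t) * Real.exp (φ s * u) := by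
    intro u hu
    have h := hintmono ξstar u hu
    rw [hfstar, mul_zero] at h
    nlinarith [Real.exp_pos (-(φ T) * u)]
  have hsignneg : ∀ u : ℝ, u ≤ ξstar →
      (∫ s in Set.Ioi T, ρ s * (1 - κ * φ s) ^ (m * t) * Real.exp (φ s * u))
        - K * (∫ s in Set.Ioi t, ρ s * (1 - κ * φ s) ^ (m * t) * Real.exp (φ s * u)) ≤ 0 := by
    intro u hu
    have h := hintmono u ξstar hu
    rw [hfstar, mul_zero] at h
    nlinarith [Real.exp_pos (-(φ T) * u)]
  -- joint integrability
  have hjoint : ∀ b : ℝ, 0 < b → Integrable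
      (fun p : ℝ × ℝ => ρ p.2 * (1 - κ * φ p.2) ^ (m * t) * Real.exp (φ p.2 * p.1))
      (((gammaMeasure (m * t) κ⁻¹).restrict (Set.Ici ξstar)).prod
        (volume.restrict (Set.Ioi b))) := by
    intro b hb
    have hsub : Set.Ioi b ⊆ Set.Ioi 0 := Set.Ioi_subset_Ioi hb.le
    have hmeas : AEStronglyMeasurable
        (fun p : ℝ × ℝ => ρ p.2 * (1 - κ * φ p.2) ^ (m * t) * Real.exp (φ p.2 * p.1))
        (((gammaMeasure (m * t) κ⁻¹).restrict (Set.Ici ξstar)).prod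
          (volume.restrict (Set.Ioi b))) := by
      rw [Measure.prod_restrict]
      refine ContinuousOn.aestronglyMeasurable ?_ (measurableSet_Ici.prod measurableSet_Ioi)
      have hmap : Set.MapsTo (fun p : ℝ × ℝ => p.2)
          (Set.Ici ξstar ×ˢ Set.Ioi b) (Set.Ioi 0) := fun p hp => hsub hp.2
      have hρ2 : ContinuousOn (fun p : ℝ × ℝ => ρ p.2) (Set.Ici ξstar ×ˢ Set.Ioi b) :=
        hρc.comp continuous_snd.continuousOn hmap
      have hφ2 : ContinuousOn (fun p : ℝ × ℝ => φ p.2) (Set.Ici ξstar ×ˢ Set.Ioi b) :=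
        (hφc.mono Set.Ioi_subset_Ici_self).comp continuous_snd.continuousOn hmap
      exact (hρ2.mul ((continuousOn_const.sub (continuousOn_const.mul hφ2)).rpow_const
          (fun p hp => Or.inl (hbase p.2 (le_of_lt (hsub hp.2))).ne'))).mul
        (Real.continuous_exp.comp_continuousOn (hφ2.mul continuous_fst.continuousOn))
    rw [integrable_prod_iff hmeas]
    refine ⟨ae_of_all _ fun u => hgint u b hb, ?_⟩
    refine Integrable.mono' (integrable_const ((1 + κ * C) ^ (m * t) * 1))
      hmeas.norm.integral_prod_right' ?_
    rw [ae_restrict_iff' measurableSet_Ici]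
    refine ae_of_all _ fun u hu => ?_
    have hu0 : 0 < u := lt_of_lt_of_le hξpos hu
    have hnorm_le : ∀ s ∈ Set.Ioi b,
        ‖ρ s * (1 - κ * φ s) ^ (m * t) * Real.exp (φ s * u)‖
          ≤ ρ s * (1 + κ * C) ^ (m * t) := by
      intro s hs
      have hs0 : 0 < s := hb.trans hs
      rw [Real.norm_eq_abs, abs_of_pos (hgpos u s hs0)]
      have hexp : Real.exp (φ s * u) ≤ 1 := by
        rw [Real.exp_le_one_iff]
        exact mul_nonpos_of_nonpos_of_nonneg (hφneg s hs0.le).le hu0.le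
      calc ρ s * (1 - κ * φ s) ^ (m * t) * Real.exp (φ s * u)
          ≤ ρ s * (1 - κ * φ s) ^ (m * t) * 1 :=
            mul_le_mul_of_nonneg_left hexp
              (mul_nonneg (hρpos s hs0).le (Real.rpow_pos_of_pos (hbase s hs0.le) _).le)
        _ = ρ s * (1 - κ * φ s) ^ (m * t) := mul_one _
        _ ≤ ρ s * (1 + κ * C) ^ (m * t) :=
            mul_le_mul_of_nonneg_left (hrpow_le s hs0.le) (hρpos s hs0).le
    rw [Real.norm_eq_abs, abs_of_nonneg (integral_nonneg fun s => norm_nonneg _)]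
    calc (∫ s in Set.Ioi b, ‖ρ s * (1 - κ * φ s) ^ (m * t) * Real.exp (φ s * u)‖)
        ≤ ∫ s in Set.Ioi b, ρ s * (1 + κ * C) ^ (m * t) :=
          integral_mono_ae ((hgint u b hb).norm) ((hρInt.mono_set hsub).mul_const _)
            ((ae_restrict_iff' measurableSet_Ioi).mpr (ae_of_all _ hnorm_le))
      _ = (∫ s in Set.Ioi b, ρ s) * (1 + κ * C) ^ (m * t) := integral_mul_const _ _
      _ ≤ 1 * (1 + κ * C) ^ (m * t) := by
          have hle : (∫ s in Set.Ioi b, ρ s) ≤ ∫ s in Set.Ioi 0, ρ s :=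
            setIntegral_mono_set hρInt
              ((ae_restrict_iff' measurableSet_Ioi).mpr
                (ae_of_all _ fun s hs => (hρpos s hs).le))
              (HasSubset.Subset.eventuallyLE hsub)
          rw [hρint] at hle
          exact mul_le_mul_of_nonneg_right hle (Real.rpow_pos_of_pos h1κC _).le
      _ = (1 + κ * C) ^ (m * t) * 1 := by ring
  have hInt_T := hjoint T hT0
  have hInt_t := hjoint t ht
  have hAν : Integrable (fun u =>
      ∫ s in Set.Ioi T, ρ s * (1 - κ * φ s) ^ (m * t) * Real.exp (φ s * u))
      ((gammaMeasure (m * t) κ⁻¹).restrict (Set.Ici ξstar)) := hInt_T.integral_prod_left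
  have hBν : Integrable (fun u =>
      ∫ s in Set.Ioi t, ρ s * (1 - κ * φ s) ^ (m * t) * Real.exp (φ s * u))
      ((gammaMeasure (m * t) κ⁻¹).restrict (Set.Ici ξstar)) := hInt_t.integral_prod_left
  have hswapT : (∫ u in Set.Ici ξstar,
        (∫ s in Set.Ioi T, ρ s * (1 - κ * φ s) ^ (m * t) * Real.exp (φ s * u))
        ∂(gammaMeasure (m * t) κ⁻¹))
      = ∫ s in Set.Ioi T, (∫ u in Set.Ici ξstar,
          ρ s * (1 - κ * φ s) ^ (m * t) * Real.exp (φ s * u)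
          ∂(gammaMeasure (m * t) κ⁻¹)) :=
    integral_integral_swap (f := fun u s =>
      ρ s * (1 - κ * φ s) ^ (m * t) * Real.exp (φ s * u)) hInt_T
  have hswapt : (∫ u in Set.Ici ξstar,
        (∫ s in Set.Ioi t, ρ s * (1 - κ * φ s) ^ (m * t) * Real.exp (φ s * u))
        ∂(gammaMeasure (m * t) κ⁻¹))
      = ∫ s in Set.Ioi t, (∫ u in Set.Ici ξstar,
          ρ s * (1 - κ * φ s) ^ (m * t) * Real.exp (φ s * u)
          ∂(gammaMeasure (m * t) κ⁻¹)) :=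
    integral_integral_swap (f := fun u s =>
      ρ s * (1 - κ * φ s) ^ (m * t) * Real.exp (φ s * u)) hInt_t
  -- inner gamma computation
  have hinner : ∀ s : ℝ, 0 < s →
      (∫ u in Set.Ici ξstar, ρ s * (1 - κ * φ s) ^ (m * t) * Real.exp (φ s * u)
        ∂(gammaMeasure (m * t) κ⁻¹))
      = ρ s * upperIncGamma (m * t) (ξstar * (κ⁻¹ - φ s)) := by
    intro s hs0
    have hφs : φ s < 0 := hφneg s hs0.le
    have hy : (0:ℝ) < 1 - κ * φ s := hbase s hs0.le
    have hbb : (0:ℝ) < κ⁻¹ - φ s := by linarith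
    rw [integral_const_mul, gamma_exp_integral ha hr hφs hξpos]
    have hid : (1 - κ * φ s) ^ (m * t) * (κ⁻¹ / (κ⁻¹ - φ s)) ^ (m * t) = 1 := by
      rw [← Real.mul_rpow hy.le (by positivity)]
      rw [show (1 - κ * φ s) * (κ⁻¹ / (κ⁻¹ - φ s)) = 1 by
        field_simp, Real.one_rpow]
    linear_combination ρ s * upperIncGamma (m * t) (ξstar * (κ⁻¹ - φ s)) * hid
  -- max rewriting
  have hmax : ∀ u : ℝ, max
      ((∫ s in Set.Ioi T, ρ s * (1 - κ * φ s) ^ (m * t) * Real.exp (φ s * u))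
        - K * ∫ s in Set.Ioi t, ρ s * (1 - κ * φ s) ^ (m * t) * Real.exp (φ s * u)) 0
      = Set.indicator (Set.Ici ξstar) (fun u =>
          (∫ s in Set.Ioi T, ρ s * (1 - κ * φ s) ^ (m * t) * Real.exp (φ s * u))
          - K * ∫ s in Set.Ioi t, ρ s * (1 - κ * φ s) ^ (m * t) * Real.exp (φ s * u)) u := by
    intro u
    by_cases h : ξstar ≤ u
    · rw [Set.indicator_of_mem (Set.mem_Ici.mpr h)]
      exact max_eq_left (hsignpos u h)
    · rw [Set.indicator_of_notMem (by simpa using h)]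
      exact max_eq_right (hsignneg u (le_of_not_ge h))
  have step1 : (∫ u, max
      ((∫ s in Set.Ioi T, ρ s * (1 - κ * φ s) ^ (m * t) * Real.exp (φ s * u))
        - K * ∫ s in Set.Ioi t, ρ s * (1 - κ * φ s) ^ (m * t) * Real.exp (φ s * u)) 0
      ∂(gammaMeasure (m * t) κ⁻¹))
      = ∫ u in Set.Ici ξstar,
          ((∫ s in Set.Ioi T, ρ s * (1 - κ * φ s) ^ (m * t) * Real.exp (φ s * u))
          - K * ∫ s in Set.Ioi t, ρ s * (1 - κ * φ s) ^ (m * t) * Real.exp (φ s * u))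
          ∂(gammaMeasure (m * t) κ⁻¹) := by
    rw [← integral_indicator measurableSet_Ici]
    exact integral_congr_ae (ae_of_all _ hmax)
  rw [step1, integral_sub hAν (hBν.const_mul K), integral_const_mul, hswapT, hswapt,
    setIntegral_congr_fun measurableSet_Ioi (fun s hs => hinner s (hT0.trans hs)),
    setIntegral_congr_fun measurableSet_Ioi (fun s hs => hinner s (ht.trans hs))]
end
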